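/- arXiv:0705.0606 — 5 statements merged into one kernel-verified Lean document; each statement's English description precedes it below -/
import Mathlib

section
/- Let x₁, …, x_k be unit vectors in ℝ^d, let λ₁, …, λ_k ≥ 0 be such that ∑_{i=1}^k λᵢ xᵢ is also a unit vector, and let y ∈ ℝ^d satisfy ‖y − xᵢ‖ ≤ 1 for all i = 1, …, k. Then ‖y − ∑_{i=1}^k λᵢ xᵢ‖ ≤ 1. -/
/-- If `x₁, …, x_k` are unit vectors in `ℝ^d`, `λᵢ ≥ 0` are such that `∑ λᵢ xᵢ` is a unit
vector, and `y` satisfies `‖y − xᵢ‖ ≤ 1` for all `i`, then `‖y − ∑ λᵢ xᵢ‖ ≤ 1`. -/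
theorem norm_sub_combination_le_one {d k : ℕ}
    (x : Fin k → EuclideanSpace ℝ (Fin d)) (l : Fin k → ℝ)
    (hx : ∀ i, ‖x i‖ = 1) (hl : ∀ i, 0 ≤ l i)
    (hsum : ‖∑ i, l i • x i‖ = 1)
    (y : EuclideanSpace ℝ (Fin d)) (hy : ∀ i, ‖y - x i‖ ≤ 1) :
    ‖y - ∑ i, l i • x i‖ ≤ 1 := by
  set s := ∑ i, l i • x i with hs
  have h1 : ∀ i, ‖y‖ ^ 2 ≤ 2 * inner ℝ y (x i) := by
    intro i
    have h := hy i
    have hsq : ‖y - x i‖ ^ 2 ≤ 1 := by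
      nlinarith [norm_nonneg (y - x i)]
    have hexp : ‖y - x i‖ ^ 2 = ‖y‖ ^ 2 - 2 * inner ℝ y (x i) + ‖x i‖ ^ 2 :=
      norm_sub_sq_real y (x i)
    rw [hexp, hx i] at hsq
    linarith
  have hS : 1 ≤ ∑ i, l i := by
    calc 1 = ‖s‖ := hsum.symm
    _ ≤ ∑ i, ‖l i • x i‖ := norm_sum_le _ _
    _ = ∑ i, l i := by
        refine Finset.sum_congr rfl fun i _ => ?_
        rw [norm_smul, hx i, mul_one, Real.norm_eq_abs, abs_of_nonneg (hl i)]
  have hinner : (inner ℝ y s : ℝ) = ∑ i, l i * inner ℝ y (x i) := by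
    rw [hs, inner_sum]
    exact Finset.sum_congr rfl fun i _ => real_inner_smul_right _ _ _
  have h2 : (∑ i, l i) * (‖y‖ ^ 2) ≤ 2 * inner ℝ y s := by
    rw [hinner, Finset.sum_mul, Finset.mul_sum]
    refine Finset.sum_le_sum fun i _ => ?_
    have := mul_le_mul_of_nonneg_left (h1 i) (hl i)
    linarith
  have h3 : ‖y‖ ^ 2 ≤ 2 * inner ℝ y s := by
    nlinarith [sq_nonneg ‖y‖]
  have hexp : ‖y - s‖ ^ 2 = ‖y‖ ^ 2 - 2 * inner ℝ y s + ‖s‖ ^ 2 :=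
    norm_sub_sq_real y s
  have hsq : ‖y - s‖ ^ 2 ≤ 1 := by
    rw [hexp, hsum]; linarith
  nlinarith [norm_nonneg (y - s)]
end

section
/- Let x, y ∈ ℝ^d. Let x₁, …, x_k and y₁, …, y_m be unit vectors such that ‖x + xᵢ − y‖ ≤ 1 for all i and ‖x − y − y_j‖ ≤ 1 for all j. Suppose there exist λ₁, …, λ_k ≥ 0 and μ₁, …, μ_m ≥ 0 such that ∑_i λᵢ xᵢ = ∑_j μ_j y_j and this common vector is a unit vector. Then x = y. -/
/-- If `x₁, …, x_k` and `y₁, …, y_m` are unit vectors with `‖x + xᵢ − y‖ ≤ 1` for all `i`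
and `‖x − y − y_j‖ ≤ 1` for all `j`, and some nonnegative combinations
`∑ λᵢ xᵢ = ∑ μ_j y_j` form a common unit vector, then `x = y`. -/
theorem cones_disjoint {d k m : ℕ} (x y : EuclideanSpace ℝ (Fin d))
    (xv : Fin k → EuclideanSpace ℝ (Fin d)) (yv : Fin m → EuclideanSpace ℝ (Fin d))
    (hxv : ∀ i, ‖xv i‖ = 1) (hyv : ∀ j, ‖yv j‖ = 1)
    (hx : ∀ i, ‖x + xv i - y‖ ≤ 1) (hy : ∀ j, ‖x - y - yv j‖ ≤ 1)
    (l : Fin k → ℝ) (mu : Fin m → ℝ)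
    (hl : ∀ i, 0 ≤ l i) (hmu : ∀ j, 0 ≤ mu j)
    (heq : ∑ i, l i • xv i = ∑ j, mu j • yv j)
    (hunit : ‖∑ i, l i • xv i‖ = 1) :
    x = y := by
  by_contra hne
  set w : EuclideanSpace ℝ (Fin d) := x - y with hw
  have hwne : w ≠ 0 := sub_ne_zero.mpr hne
  have hw2 : 0 < ‖w‖ ^ 2 := by
    have := norm_pos_iff.mpr hwne
    positivity
  have hxi : ∀ i, inner ℝ w (xv i) ≤ -(‖w‖ ^ 2 / 2) := by
    intro i
    have h1 : ‖w + xv i‖ ≤ 1 := by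
      have : x + xv i - y = w + xv i := by rw [hw]; abel
      rw [← this]; exact hx i
    have h2 : ‖w + xv i‖ ^ 2 ≤ 1 := by
      nlinarith [norm_nonneg (w + xv i)]
    have h3 := norm_add_sq_real w (xv i)
    rw [hxv i] at h3
    nlinarith
  have hyj : ∀ j, (‖w‖ ^ 2 / 2 : ℝ) ≤ inner ℝ w (yv j) := by
    intro j
    have h1 : ‖w - yv j‖ ≤ 1 := hy j
    have h2 : ‖w - yv j‖ ^ 2 ≤ 1 := by
      nlinarith [norm_nonneg (w - yv j)]
    have h3 := norm_sub_sq_real w (yv j)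
    rw [hyv j] at h3
    nlinarith
  have hiL : (inner ℝ w (∑ i, l i • xv i) : ℝ) = ∑ i, l i * inner ℝ w (xv i) := by
    rw [inner_sum]
    simp [inner_smul_right]
  have hiR : (inner ℝ w (∑ j, mu j • yv j) : ℝ) = ∑ j, mu j * inner ℝ w (yv j) := by
    rw [inner_sum]
    simp [inner_smul_right]
  have hleft : (inner ℝ w (∑ i, l i • xv i) : ℝ) ≤ (∑ i, l i) * (-(‖w‖ ^ 2 / 2)) := by
    rw [hiL, Finset.sum_mul]
    exact Finset.sum_le_sum fun i _ => mul_le_mul_of_nonneg_left (hxi i) (hl i)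
  have hright : (0 : ℝ) ≤ (inner ℝ w (∑ j, mu j • yv j) : ℝ) := by
    rw [hiR]
    apply Finset.sum_nonneg
    intro j _
    exact mul_nonneg (hmu j) (le_trans (by positivity) (hyj j))
  rw [heq] at hleft
  have hS : (∑ i, l i) ≤ 0 := by nlinarith
  have hS0 : (∑ i, l i) = 0 := le_antisymm hS (Finset.sum_nonneg fun i _ => hl i)
  have hzero : ∀ i ∈ Finset.univ, l i = 0 :=
    (Finset.sum_eq_zero_iff_of_nonneg fun i _ => hl i).mp hS0
  have : (∑ i, l i • xv i) = 0 := by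
    apply Finset.sum_eq_zero
    intro i hi
    rw [hzero i hi, zero_smul]
  rw [this, norm_zero] at hunit
  norm_num at hunit
end

section
/- Let x, y ∈ ℝ^d with x ≠ y and ‖x − y‖ ≤ 1. Let x₁, …, x_k and y₁, …, y_m be unit vectors such that ‖x + xᵢ − y − y_j‖ ≤ 1 for all i and all j. Suppose there exist λ₁, …, λ_k ≥ 0 and μ₁, …, μ_m ≥ 0 such that ∑_i λᵢ xᵢ = −∑_j μ_j y_j and this common vector u = ∑_i λᵢ xᵢ is a unit vector. Then ∑_i λᵢ xᵢ = y − x; in particular ‖x − y‖ = 1. -/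
open scoped RealInnerProductSpace
set_option maxHeartbeats 1000000

/-- Let `x ≠ y` with `‖x − y‖ ≤ 1`, and let `x₁, …, x_k`, `y₁, …, y_m` be unit vectors
with `‖x + xᵢ − y − y_j‖ ≤ 1` for all `i, j`. If nonnegative combinations satisfy
`∑ λᵢ xᵢ = −∑ μ_j y_j` and this common vector is a unit vector, then
`∑ λᵢ xᵢ = y − x`; in particular `‖x − y‖ = 1`. -/
theorem cone_meets_antipodal_cone {d k m : ℕ} (x y : EuclideanSpace ℝ (Fin d))
    (hxy : x ≠ y) (hdist : ‖x - y‖ ≤ 1)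
    (xv : Fin k → EuclideanSpace ℝ (Fin d)) (yv : Fin m → EuclideanSpace ℝ (Fin d))
    (hxv : ∀ i, ‖xv i‖ = 1) (hyv : ∀ j, ‖yv j‖ = 1)
    (hb : ∀ i, ∀ j, ‖x + xv i - y - yv j‖ ≤ 1)
    (l : Fin k → ℝ) (mu : Fin m → ℝ)
    (hl : ∀ i, 0 ≤ l i) (hmu : ∀ j, 0 ≤ mu j)
    (heq : ∑ i, l i • xv i = -∑ j, mu j • yv j)
    (hunit : ‖∑ i, l i • xv i‖ = 1) :
    ∑ i, l i • xv i = y - x ∧ ‖x - y‖ = 1 := by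
  set u := ∑ i, l i • xv i with hu
  set w := x - y with hw
  set L := ∑ i, l i with hLdef
  set M := ∑ j, mu j with hMdef
  set t := ‖w‖ with htdef
  set c := (⟪w, u⟫ : ℝ) with hcdef
  have hu' : ∑ j, mu j • yv j = -u := by rw [heq, neg_neg]
  have hL1 : 1 ≤ L := by
    calc (1:ℝ) = ‖u‖ := hunit.symm
    _ ≤ ∑ i, ‖l i • xv i‖ := norm_sum_le _ _
    _ = L := by simp [norm_smul, hxv, abs_of_nonneg (hl _), hLdef]
  have hM1 : 1 ≤ M := by
    have hnu : ‖∑ j, mu j • yv j‖ = 1 := by rw [hu', norm_neg, hunit]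
    calc (1:ℝ) = ‖∑ j, mu j • yv j‖ := hnu.symm
    _ ≤ ∑ j, ‖mu j • yv j‖ := norm_sum_le _ _
    _ = M := by simp [norm_smul, hyv, abs_of_nonneg (hmu _), hMdef]
  have ht0 : 0 ≤ t := norm_nonneg _
  have hct : -t ≤ c := by
    have h := abs_real_inner_le_norm w u
    rw [hunit] at h
    have := neg_abs_le (⟪w, u⟫ : ℝ)
    simp only [← hcdef] at h this
    nlinarith [abs_nonneg c]
  have hexp : ∀ i j, t^2 + 2 + 2*⟪w, xv i⟫ - 2*⟪w, yv j⟫ - 2*⟪xv i, yv j⟫ ≤ 1 := by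
    intro i j
    have h1 := hb i j
    have h2 : x + xv i - y - yv j = w + xv i - yv j := by rw [hw]; abel
    rw [h2] at h1
    have h3 : ‖w + xv i - yv j‖^2 ≤ 1 := by nlinarith [norm_nonneg (w + xv i - yv j)]
    have h4 : ‖w + xv i - yv j‖^2 = t^2 + ‖xv i‖^2 + ‖yv j‖^2 + 2*⟪w, xv i⟫
        - 2*⟪w, yv j⟫ - 2*⟪xv i, yv j⟫ := by
      simp only [htdef, ← real_inner_self_eq_norm_sq, inner_add_left, inner_add_right,
        inner_sub_left, inner_sub_right, real_inner_comm (xv i) w, real_inner_comm (yv j) w,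
        real_inner_comm (yv j) (xv i)]
      ring
    rw [hxv i, hyv j] at h4
    nlinarith [h4, h3]
  have hswx : ∑ i, l i * ⟪w, xv i⟫ = c := by
    rw [hcdef, hu, inner_sum]
    exact Finset.sum_congr rfl fun i _ => (real_inner_smul_right _ _ _).symm
  have hswy : ∑ j, mu j * ⟪w, yv j⟫ = -c := by
    have h1 : (⟪w, ∑ j, mu j • yv j⟫ : ℝ) = -c := by rw [hu', inner_neg_right, hcdef]
    rw [← h1, inner_sum]
    exact Finset.sum_congr rfl fun j _ => (real_inner_smul_right _ _ _).symm
  have hxyu : ∀ i, ∑ j, mu j * ⟪xv i, yv j⟫ = -⟪xv i, u⟫ := by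
    intro i
    have h1 : (⟪xv i, ∑ j, mu j • yv j⟫ : ℝ) = -⟪xv i, u⟫ := by rw [hu', inner_neg_right]
    rw [← h1, inner_sum]
    exact Finset.sum_congr rfl fun j _ => (real_inner_smul_right _ _ _).symm
  have huu : ∑ i, l i * ⟪xv i, u⟫ = 1 := by
    have h1 : (⟪u, u⟫ : ℝ) = 1 := by rw [real_inner_self_eq_norm_sq, hunit]; norm_num
    rw [← h1]
    conv_rhs => rw [hu, sum_inner]
    exact Finset.sum_congr rfl fun i _ => (real_inner_smul_left _ _ _).symm
  have hA : ∀ i, M*(t^2+2) + 2*M*⟪w, xv i⟫ + 2*c + 2*⟪xv i, u⟫ ≤ M := by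
    intro i
    have h1 : ∑ j, mu j * (t^2 + 2 + 2*⟪w, xv i⟫ - 2*⟪w, yv j⟫ - 2*⟪xv i, yv j⟫)
        ≤ ∑ j, mu j * 1 :=
      Finset.sum_le_sum fun j _ => mul_le_mul_of_nonneg_left (hexp i j) (hmu j)
    have h2 : ∑ j, mu j * (t^2 + 2 + 2*⟪w, xv i⟫ - 2*⟪w, yv j⟫ - 2*⟪xv i, yv j⟫)
        = (t^2 + 2 + 2*⟪w, xv i⟫) * M - 2*(∑ j, mu j * ⟪w, yv j⟫)
          - 2*(∑ j, mu j * ⟪xv i, yv j⟫) := by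
      rw [hMdef, Finset.mul_sum, Finset.mul_sum, Finset.mul_sum, ← Finset.sum_sub_distrib,
        ← Finset.sum_sub_distrib]
      exact Finset.sum_congr rfl fun j _ => by ring
    rw [h2, hswy, hxyu i] at h1
    simp only [mul_one] at h1
    rw [← hMdef] at h1
    ring_nf at h1 ⊢
    linarith
  have key : L*M*(t^2+2) + 2*M*c + 2*L*c + 2 ≤ L*M := by
    have h1 : ∑ i, l i * (M*(t^2+2) + 2*M*⟪w, xv i⟫ + 2*c + 2*⟪xv i, u⟫)
        ≤ ∑ i, l i * M :=
      Finset.sum_le_sum fun i _ => mul_le_mul_of_nonneg_left (hA i) (hl i)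
    have h2 : ∑ i, l i * (M*(t^2+2) + 2*M*⟪w, xv i⟫ + 2*c + 2*⟪xv i, u⟫)
        = (M*(t^2+2) + 2*c) * L + 2*M*(∑ i, l i * ⟪w, xv i⟫)
          + 2*(∑ i, l i * ⟪xv i, u⟫) := by
      calc ∑ i, l i * (M*(t^2+2) + 2*M*⟪w, xv i⟫ + 2*c + 2*⟪xv i, u⟫)
          = ∑ i, ((M*(t^2+2) + 2*c) * l i + 2*M*(l i * ⟪w, xv i⟫) + 2*(l i * ⟪xv i, u⟫)) :=
            Finset.sum_congr rfl fun i _ => by ring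
        _ = (M*(t^2+2) + 2*c) * (∑ i, l i) + 2*M*(∑ i, l i * ⟪w, xv i⟫)
            + 2*(∑ i, l i * ⟪xv i, u⟫) := by
            rw [Finset.sum_add_distrib, Finset.sum_add_distrib, ← Finset.mul_sum,
              ← Finset.mul_sum, ← Finset.mul_sum]
        _ = (M*(t^2+2) + 2*c) * L + 2*M*(∑ i, l i * ⟪w, xv i⟫)
            + 2*(∑ i, l i * ⟪xv i, u⟫) := by rw [← hLdef]
    have h3 : ∑ i, l i * M = L * M := by rw [hLdef, ← Finset.sum_mul]
    rw [h2, hswx, huu, h3] at h1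
    ring_nf at h1 ⊢
    linarith
  have ht1' : 1 ≤ t := by
    nlinarith [key, mul_nonneg (by linarith : (0:ℝ) ≤ L + M) (by linarith : (0:ℝ) ≤ c + t),
      mul_nonneg (mul_nonneg (by linarith : (0:ℝ) ≤ L) (by linarith : (0:ℝ) ≤ M)) (sq_nonneg (t-1)),
      mul_nonneg (mul_nonneg (by linarith : (0:ℝ) ≤ L - 1) (by linarith : (0:ℝ) ≤ M - 1)) ht0]
  have htt : t = 1 := le_antisymm hdist ht1'
  rw [htt] at key
  norm_num at key
  have hc1 : c = -1 := by
    have hle : c ≤ -1 := by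
      by_contra hcon
      push_neg at hcon
      have h6 : 0 < (L + M) * (c + 1) := mul_pos (by linarith) (by linarith)
      nlinarith [key, mul_nonneg (by linarith : (0:ℝ) ≤ L - 1) (by linarith : (0:ℝ) ≤ M - 1), h6]
    have hge : -1 ≤ c := by rw [htt] at hct; linarith
    linarith
  have hz : ‖u + w‖^2 = 0 := by
    have h4 : ‖u + w‖^2 = ‖u‖^2 + 2*⟪u, w⟫ + ‖w‖^2 := norm_add_sq_real u w
    have h5 : (⟪u, w⟫ : ℝ) = c := by rw [hcdef]; exact real_inner_comm w u
    rw [hunit, h5, hc1, ← htdef, htt] at h4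
    rw [h4]; ring
  have hz2 : u + w = 0 := by
    have := sq_eq_zero_iff.mp hz
    exact norm_eq_zero.mp this
  have hu2 : u = y - x := by
    have h := eq_neg_of_add_eq_zero_left hz2
    rw [h, hw, neg_sub]
  exact ⟨hu2, by rw [← htdef] at *; rw [htt]⟩
end

section
/- Let x₁, …, x_k be unit vectors in ℝ^d with ‖xᵢ − x_j‖ ≤ 1 for all i, j. Then there is no unit vector u such that both u and −u are nonnegative linear combinations of x₁, …, x_k; that is, there are no coefficients λ₁, …, λ_k ≥ 0 and μ₁, …, μ_k ≥ 0 with ∑_i λᵢ xᵢ = u and ∑_i μᵢ xᵢ = −u for some vector u of norm 1. -/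
open scoped InnerProductSpace


/-- If `x₁, …, x_k` are unit vectors in `ℝ^d` with `‖xᵢ − x_j‖ ≤ 1` for all `i, j`, then
there is no unit vector `u` such that both `u` and `−u` are nonnegative linear
combinations of the `xᵢ`. -/
theorem no_antipodal_unit_in_cone {d k : ℕ}
    (x : Fin k → EuclideanSpace ℝ (Fin d))
    (hx : ∀ i, ‖x i‖ = 1) (hsep : ∀ i j, ‖x i - x j‖ ≤ 1) :
    ¬ ∃ (u : EuclideanSpace ℝ (Fin d)) (l mu : Fin k → ℝ),
      ‖u‖ = 1 ∧ (∀ i, 0 ≤ l i) ∧ (∀ i, 0 ≤ mu i) ∧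
      ∑ i, l i • x i = u ∧ ∑ i, mu i • x i = -u := by
  rintro ⟨u, l, mu, hu, hl, hmu, hsum1, hsum2⟩
  have hinner : ∀ i j, (1:ℝ)/2 ≤ ⟪x i, x j⟫_ℝ := by
    intro i j
    have h := hsep i j
    have h2 : ‖x i - x j‖ ^ 2 ≤ 1 := by nlinarith [norm_nonneg (x i - x j)]
    have := norm_sub_sq_real (x i) (x j)
    rw [hx i, hx j] at this
    nlinarith
  have key : ⟪u, -u⟫_ℝ = ∑ i, ∑ j, mu i * l j * ⟪x j, x i⟫_ℝ := by
    rw [← hsum2, ← hsum1]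
    rw [inner_sum]
    refine Finset.sum_congr rfl fun j _ => ?_
    rw [sum_inner]
    refine Finset.sum_congr rfl fun i _ => ?_
    rw [real_inner_smul_left, real_inner_smul_right]
    ring
  have hneg : ⟪u, -u⟫_ℝ = -1 := by
    rw [inner_neg_right, real_inner_self_eq_norm_sq, hu]
    norm_num
  have hpos : (0:ℝ) ≤ ∑ i, ∑ j, mu i * l j * ⟪x j, x i⟫_ℝ := by
    refine Finset.sum_nonneg fun i _ => Finset.sum_nonneg fun j _ => ?_
    have := hinner j i
    have := hl j
    have := hmu i
    positivity
  rw [hneg] at key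
  linarith [key ▸ hpos]
end

section
/- Let x₁, …, x_k be unit vectors in ℝ^d (k ≥ 1) with ‖xᵢ − x_j‖ ≤ 1 for all i, j. Then there exists a vector v ∈ ℝ^d with ⟨v, xᵢ⟩ > 0 for every i = 1, …, k; that is, the vectors x₁, …, x_k all lie in a common open half-space, so the corresponding points of the unit sphere lie in a common open hemisphere. -/
open scoped RealInnerProductSpace

/-- If `x₁, …, x_k` (`k ≥ 1`) are unit vectors in `ℝ^d` with `‖xᵢ − x_j‖ ≤ 1` for all
`i, j`, then there is a vector `v` with `⟨v, xᵢ⟩ > 0` for every `i`, i.e. the `xᵢ` lie in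
a common open half-space (a common open hemisphere of the unit sphere). -/
theorem exists_open_hemisphere {d k : ℕ} (hk : 1 ≤ k)
    (x : Fin k → EuclideanSpace ℝ (Fin d))
    (hx : ∀ i, ‖x i‖ = 1) (hsep : ∀ i j, ‖x i - x j‖ ≤ 1) :
    ∃ v : EuclideanSpace ℝ (Fin d), ∀ i, 0 < ⟪v, x i⟫ := by
  have key : ∀ i j, (1/2 : ℝ) ≤ ⟪x i, x j⟫ := by
    intro i j
    have h := hsep i j
    have h2 : ‖x i - x j‖ ^ 2 ≤ 1 := by
      calc ‖x i - x j‖ ^ 2 ≤ 1 ^ 2 := by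
            apply pow_le_pow_left₀ (norm_nonneg _) h
          _ = 1 := one_pow 2
    have hexp : ‖x i - x j‖ ^ 2 = 2 - 2 * ⟪x i, x j⟫ := by
      rw [@norm_sub_sq_real]
      rw [hx i, hx j]; ring
    linarith [hexp ▸ h2]
  refine ⟨∑ i, x i, fun j => ?_⟩
  rw [sum_inner]
  have : (k : ℝ) * (1/2) ≤ ∑ i, ⟪x i, x j⟫ := by
    calc (k : ℝ) * (1/2) = ∑ _i : Fin k, (1/2 : ℝ) := by simp
      _ ≤ ∑ i, ⟪x i, x j⟫ := Finset.sum_le_sum fun i _ => key i j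
  have hk' : (0:ℝ) < k := by exact_mod_cast hk
  linarith
end
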